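/- Let r ≥ 1 and let V_r = ℤ[X]/(U_r) be the Verlinde algebra, with u_i the image of U_i in V_r. Then for all integers n, n' with 0 ≤ n ≤ n' < r, the Clebsch–Gordan rule holds in V_r: u_n · u_{n'} = Σ_{i=0}^{min(n, r−n'−1)} u_{n'−n+2i}. -/
import Mathlib
open Polynomial

/-- The polynomials `U n` with `U 0 = 1`, `U 1 = X`, `U (n+1) = X * U n - U (n-1)`. -/
noncomputable def U (n : ℕ) : Polynomial ℤ := Polynomial.dickson 2 1 n

/-- The Verlinde algebra `V r = ℤ[X]/(U r)`. -/
abbrev Verlinde (r : ℕ) : Type := Polynomial ℤ ⧸ Ideal.span {U r}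

/-- `u r i` is the image of `U i` in the Verlinde algebra `V r`. -/
noncomputable def u (r i : ℕ) : Verlinde r :=
  Ideal.Quotient.mk (Ideal.span {U r}) (U i)

lemma U_zero : U 0 = 1 := by
  simp only [U, dickson_zero]; norm_num

lemma U_add_two (n : ℕ) : U (n+2) = X * U (n+1) - U n := by
  simp [U, dickson_add_two]

lemma X_mul_U (k : ℕ) : X * U (k+1) = U (k+2) + U k := by
  rw [U_add_two]; ring

lemma U_mul_U : ∀ n n' : ℕ, n ≤ n' →
    U n * U n' = ∑ i ∈ Finset.range (n+1), U (n' - n + 2*i) := by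
  intro n
  induction n using Nat.twoStepInduction with
  | zero => intro n' _; simp [U_zero]
  | one =>
    intro n' h1
    obtain ⟨m, rfl⟩ := Nat.exists_eq_add_of_le h1
    have hU1 : U 1 = X := dickson_one 2 1
    have e0 : (1:ℕ) + m = m + 1 := by omega
    rw [e0, hU1, X_mul_U m, Finset.sum_range_succ, Finset.sum_range_one,
      show m + 1 - 1 + 2*0 = m by omega, show m + 1 - 1 + 2*1 = m + 2 by omega]
    ring
  | more n ih ih1 =>
    intro n' h2
    obtain ⟨d, rfl⟩ := Nat.exists_eq_add_of_le h2
    rw [U_add_two, sub_mul, mul_assoc,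
      ih1 (n+2+d) (by omega), ih (n+2+d) (by omega), Finset.mul_sum]
    have e1 : ∀ i ∈ Finset.range (n+2),
        X * U (n+2+d - (n+1) + 2*i) = U (d + 2*i + 2) + U (d + 2*i) := by
      intro i _
      have h : n+2+d - (n+1) + 2*i = (d + 2*i) + 1 := by omega
      have h' : (d + 2*i) + 2 = d + 2*i + 2 := rfl
      rw [h, X_mul_U]
    rw [Finset.sum_congr rfl e1, Finset.sum_add_distrib]
    have e2 : ∑ i ∈ Finset.range (n+1), U (n+2+d - n + 2*i)
        = ∑ i ∈ Finset.range (n+1), U (d + 2*i + 2) := by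
      apply Finset.sum_congr rfl; intro i _; congr 1; omega
    have e3 : ∑ i ∈ Finset.range (n+3), U (n+2+d - (n+2) + 2*i)
        = ∑ i ∈ Finset.range (n+3), U (d + 2*i) := by
      apply Finset.sum_congr rfl; intro i _; congr 1; omega
    rw [e2, e3, Finset.sum_range_succ (fun i => U (d + 2*i)) (n+2),
      Finset.sum_range_succ (fun i => U (d + 2*i + 2)) (n+1)]
    have e4 : d + 2*(n+2) = d + 2*(n+1) + 2 := by omega
    rw [e4]; ring

lemma u_r_eq_zero (r : ℕ) : u r r = 0 := by
  rw [u, Ideal.Quotient.eq_zero_iff_mem]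
  exact Ideal.subset_span rfl

lemma u_add_two (r k : ℕ) :
    u r (k+2) = Ideal.Quotient.mk (Ideal.span {U r}) (X : Polynomial ℤ) * u r (k+1) - u r k := by
  simp only [u, ← map_mul, ← map_sub]
  rw [← U_add_two]

lemma u_reflect (r : ℕ) (hr : 1 ≤ r) : ∀ j, j ≤ r → u r (r + j) + u r (r - j) = 0 := by
  intro j
  induction j using Nat.twoStepInduction with
  | zero => intro _; simp [u_r_eq_zero]
  | one =>
    intro _
    have rec1 : u r (r - 1 + 2) =
        Ideal.Quotient.mk (Ideal.span {U r}) (X : Polynomial ℤ) * u r (r - 1 + 1) - u r (r - 1) :=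
      u_add_two r (r - 1)
    have e1 : r - 1 + 2 = r + 1 := by omega
    have e2 : r - 1 + 1 = r := by omega
    rw [e1, e2, u_r_eq_zero] at rec1
    rw [rec1]; ring
  | more j ih ih1 =>
    intro h
    have A := ih (by omega)
    have B := ih1 (by omega)
    have rec1 : u r (r + j + 2) =
        Ideal.Quotient.mk (Ideal.span {U r}) (X : Polynomial ℤ) * u r (r + j + 1) - u r (r + j) :=
      u_add_two r (r + j)
    have rec2 : u r (r - (j+2) + 2) =
        Ideal.Quotient.mk (Ideal.span {U r}) (X : Polynomial ℤ) * u r (r - (j+2) + 1)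
          - u r (r - (j+2)) := u_add_two r (r - (j+2))
    have e1 : r - (j+2) + 2 = r - j := by omega
    have e2 : r - (j+2) + 1 = r - (j+1) := by omega
    have e3 : r + (j+1) = r + j + 1 := by omega
    have e4 : r + (j+2) = r + j + 2 := by omega
    rw [e1, e2] at rec2
    rw [e3] at B
    rw [e4, rec1]
    linear_combination Ideal.Quotient.mk (Ideal.span {U r}) (X : Polynomial ℤ) * B - A + rec2

lemma u_add_u (r : ℕ) (hr : 1 ≤ r) (p q : ℕ) (h : p + q = 2*r) : u r p + u r q = 0 := by
  rcases le_total r p with hp | hp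
  · have h2 := u_reflect r hr (p - r) (by omega)
    rw [show r + (p - r) = p by omega, show r - (p - r) = q by omega] at h2
    exact h2
  · have h2 := u_reflect r hr (q - r) (by omega)
    rw [show r + (q - r) = q by omega, show r - (q - r) = p by omega] at h2
    rw [add_comm]; exact h2

theorem verlinde_clebsch_gordan (r : ℕ) (hr : 1 ≤ r) (n n' : ℕ)
    (hnn' : n ≤ n') (hn' : n' < r) :
    u r n * u r n'
      = ∑ i ∈ Finset.range (min n (r - n' - 1) + 1), u r (n' - n + 2 * i) := by
  have key : u r n * u r n' = ∑ i ∈ Finset.range (n+1), u r (n' - n + 2*i) := by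
    simp only [u, ← map_mul, U_mul_U n n' hnn', map_sum]
  rw [key]
  rcases le_or_gt n (r - n' - 1) with h | h
  · rw [min_eq_left h]
  · have hm : min n (r - n' - 1) = r - n' - 1 := by omega
    rw [hm]
    set m := r - n' - 1 with hmdef
    have hsplit : ∑ i ∈ Finset.Ico 0 (m+1), u r (n' - n + 2*i)
        + ∑ i ∈ Finset.Ico (m+1) (n+1), u r (n' - n + 2*i)
        = ∑ i ∈ Finset.Ico 0 (n+1), u r (n' - n + 2*i) :=
      Finset.sum_Ico_consecutive _ (by omega) (by omega)
    have htail : ∑ i ∈ Finset.Ico (m+1) (n+1), u r (n' - n + 2*i) = 0 := by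
      apply Finset.sum_involution (fun a _ => m + 1 + n - a)
      · intro a ha
        simp only [Finset.mem_Ico] at ha
        apply u_add_u r hr
        omega
      · intro a ha hfa hga
        simp only [Finset.mem_Ico] at ha
        apply hfa
        have : n' - n + 2*a = r := by omega
        rw [this]
        exact u_r_eq_zero r
      · intro a ha
        simp only [Finset.mem_Ico] at ha ⊢
        omega
      · intro a ha
        simp only [Finset.mem_Ico] at ha
        omega
    rw [Finset.range_eq_Ico, ← hsplit, htail, add_zero, ← Finset.range_eq_Ico]
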